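/- Let F be a differential field of characteristic zero with algebraically closed field of constants C and F ≠ C, and let E be a Picard-Vessiot extension of F. If there exists a tuple f ∈ (F*)^l such that E is a Picard-Vessiot extension of F for the operator L_f = f_1 ∂ f_2 ∂ ⋯ f_l ∂, then the differential Galois group G(E|F) is a unipotent linear algebraic group. -/

import Mathlib

/-- The differential operator `L_f = f₁ ∂ f₂ ∂ ⋯ f_l ∂` applied to `η`. -/
def Lop {E : Type*} [Field E] (D : E → E) : List E → E → E
  | [], η => η
  | f :: fs, η => f * D (Lop D fs η)

/-- if `E` is a Picard-Vessiot extension of `F` (with algebraically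
closed constants `C`, `F ≠ C`) for an operator `L_f = f₁ ∂ ⋯ f_l ∂` with all
`f_i ∈ F*`, then the differential Galois group is unipotent; by the standard
characterization this means `E = F(η₁,…,η_m)` with `η₁' ∈ F` and
`η_i' ∈ F(η₁,…,η_{i-1})`. -/
theorem stmt_7 (F E : Type*) [Field F] [Field E] [Algebra F E] [CharZero F]
    (DF : F → F)
    (hFadd : ∀ a b : F, DF (a + b) = DF a + DF b)
    (hFmul : ∀ a b : F, DF (a * b) = a * DF b + DF a * b)
    (DE : E → E)
    (hEadd : ∀ a b : E, DE (a + b) = DE a + DE b)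
    (hEmul : ∀ a b : E, DE (a * b) = a * DE b + DE a * b)
    (hcompat : ∀ a : F, DE (algebraMap F E a) = algebraMap F E (DF a))
    -- the field of constants of F is algebraically closed
    (hCalg : ∀ p : Polynomial F, 0 < p.degree → (∀ i, DF (p.coeff i) = 0) →
      ∃ r : F, DF r = 0 ∧ p.eval r = 0)
    -- F ≠ C
    (hFC : ∃ a : F, DF a ≠ 0)
    -- E and F have the same constants
    (hconst : ∀ e : E, DE e = 0 → ∃ c : F, DF c = 0 ∧ algebraMap F E c = e)
    -- E is a Picard-Vessiot extension of F for L_f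
    (l : ℕ) (hl : 1 ≤ l) (fs : Fin l → F) (hfs : ∀ i, fs i ≠ 0)
    (y : Fin l → E)
    (hsol : ∀ i, Lop DE ((List.ofFn fs).map (algebraMap F E)) (y i) = 0)
    (hindep : ∀ c : Fin l → E, (∀ i, DE (c i) = 0) →
      ∑ i, c i * y i = 0 → ∀ i, c i = 0)
    (hgen : IntermediateField.adjoin F {e : E | ∃ i j, DE^[j] (y i) = e} = ⊤) :
    ∃ (m : ℕ) (η : Fin m → E),
      IntermediateField.adjoin F (Set.range η) = ⊤ ∧
      ∀ i : Fin m, DE (η i) ∈ IntermediateField.adjoin F (η '' {j | j < i}) := by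
  classical
  have hl0 : 0 < l := hl
  set gs : List E := (List.ofFn fs).map (algebraMap F E) with hgs
  have hlen : gs.length = l := by simp [hgs]
  -- basic properties of the derivation DE
  have hD0 : DE 0 = 0 := by
    have h := hEadd 0 0
    rw [add_zero] at h
    exact (right_eq_add.mp h)
  have hD1 : DE 1 = 0 := by
    have h := hEmul 1 1
    rw [mul_one, one_mul, mul_one] at h
    exact (right_eq_add.mp h)
  have hDinv : ∀ x : E, x ≠ 0 → DE x⁻¹ = -(DE x * (x⁻¹ * x⁻¹)) := by
    intro x hx
    have h := hEmul x x⁻¹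
    rw [mul_inv_cancel₀ hx, hD1] at h
    have h2 : x * DE x⁻¹ = -(DE x * x⁻¹) := by
      linear_combination h.symm
    have h3 : DE x⁻¹ = x⁻¹ * (x * DE x⁻¹) := (inv_mul_cancel_left₀ hx _).symm
    rw [h3, h2]; ring
  -- getElem of gs
  have hget : ∀ (k : ℕ) (hk : k < l),
      gs[k]'(by rw [hlen]; exact hk) = algebraMap F E (fs ⟨k, hk⟩) := by
    intro k hk
    simp [hgs]
  have hgne : ∀ (k : ℕ) (hk : k < l), (algebraMap F E (fs ⟨k, hk⟩)) ≠ 0 := by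
    intro k hk
    simpa using hfs ⟨k, hk⟩
  -- the tower of iterated integrals
  set w : Fin l → ℕ → E := fun i k => Lop DE (gs.drop (k + 1)) (y i) with hw
  have hw_top : ∀ i, w i (l - 1) = y i := by
    intro i
    have hdropl : gs.drop l = [] := by
      rw [← hlen]; exact List.drop_length
    simp only [hw, Nat.sub_add_cancel hl, hdropl]
    rfl
  have hw0 : ∀ i, DE (w i 0) = 0 := by
    intro i
    have h := hsol i
    have h0 : (0 : ℕ) < gs.length := by rw [hlen]; exact hl0
    rw [show gs = gs.drop 0 from rfl, List.drop_eq_getElem_cons h0] at h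
    rw [hget 0 hl0] at h
    have heq : Lop DE (algebraMap F E (fs ⟨0, hl0⟩) :: gs.drop 1) (y i)
        = algebraMap F E (fs ⟨0, hl0⟩) * DE (w i 0) := rfl
    rw [heq] at h
    exact (mul_eq_zero.mp h).resolve_left (hgne 0 hl0)
  have hrel : ∀ (i : Fin l) (k : ℕ) (hk : k < l), 1 ≤ k →
      w i (k - 1) = algebraMap F E (fs ⟨k, hk⟩) * DE (w i k) := by
    intro i k hk h1
    have hkl : k < gs.length := by rw [hlen]; exact hk
    have heq : w i (k - 1) = Lop DE (gs.drop k) (y i) := by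
      simp only [hw, Nat.sub_add_cancel h1]
    rw [heq, List.drop_eq_getElem_cons hkl, hget k hk]
    rfl
  have hDw : ∀ (i : Fin l) (k : ℕ) (hk : k < l), 1 ≤ k →
      DE (w i k) = w i (k - 1) * (algebraMap F E (fs ⟨k, hk⟩))⁻¹ := by
    intro i k hk h1
    rw [hrel i k hk h1, mul_comm (algebraMap F E (fs ⟨k, hk⟩)) (DE (w i k)),
      mul_assoc, mul_inv_cancel₀ (hgne k hk), mul_one]
  -- the generating family
  set η : Fin (l * l) → E :=
    fun p => w ⟨p.val % l, Nat.mod_lt _ hl0⟩ (p.val / l) with hη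
  have hidx : ∀ (i : Fin l) (k : ℕ), k < l → l * k + i.val < l * l := by
    intro i k hk
    calc l * k + i.val < l * k + l := by omega
    _ = l * (k + 1) := by ring
    _ ≤ l * l := Nat.mul_le_mul_left _ hk
  have hηw : ∀ (i : Fin l) (k : ℕ) (hk : k < l),
      η ⟨l * k + i.val, hidx i k hk⟩ = w i k := by
    intro i k hk
    have h1 : (l * k + i.val) % l = i.val := by
      rw [Nat.mul_add_mod]; exact Nat.mod_eq_of_lt i.isLt
    have h2 : (l * k + i.val) / l = k := by
      rw [Nat.mul_add_div hl0, Nat.div_eq_of_lt i.isLt, add_zero]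
    show w ⟨(l * k + i.val) % l, _⟩ ((l * k + i.val) / l) = w i k
    rw [h2]
    congr 1
    exact Fin.ext h1
  have hwK : ∀ (i : Fin l) (k : ℕ), k < l →
      w i k ∈ IntermediateField.adjoin F (Set.range η) := by
    intro i k hk
    rw [← hηw i k hk]
    exact IntermediateField.subset_adjoin _ _ ⟨_, rfl⟩
  have hDwK : ∀ (i : Fin l) (k : ℕ), k < l →
      DE (w i k) ∈ IntermediateField.adjoin F (Set.range η) := by
    intro i k hk
    rcases Nat.eq_zero_or_pos k with h0 | h1
    · rw [h0, hw0 i]; exact zero_mem _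
    · rw [hDw i k hk h1]
      exact mul_mem (hwK i (k - 1) (by omega))
        (inv_mem (IntermediateField.algebraMap_mem _ _))
  -- the adjoin of the tower is closed under DE
  have hclosed : ∀ x ∈ IntermediateField.adjoin F (Set.range η),
      DE x ∈ IntermediateField.adjoin F (Set.range η) := by
    intro x hx
    induction hx using IntermediateField.adjoin_induction with
    | mem x hx =>
      rcases hx with ⟨p, rfl⟩
      have hk : p.val / l < l := Nat.div_lt_of_lt_mul p.isLt
      exact hDwK _ _ hk
    | algebraMap x =>
      rw [hcompat]
      exact IntermediateField.algebraMap_mem _ _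
    | add x z hx hz ihx ihz =>
      rw [hEadd]; exact add_mem ihx ihz
    | inv x hx ihx =>
      by_cases hx0 : x = 0
      · rw [hx0, inv_zero, hD0]; exact zero_mem _
      · rw [hDinv x hx0]
        exact neg_mem (mul_mem ihx (mul_mem (inv_mem hx) (inv_mem hx)))
    | mul x z hx hz ihx ihz =>
      rw [hEmul]
      exact add_mem (mul_mem hx ihz) (mul_mem ihx hz)
  have hiter : ∀ (i : Fin l) (j : ℕ),
      DE^[j] (y i) ∈ IntermediateField.adjoin F (Set.range η) := by
    intro i j
    induction j with
    | zero =>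
      simpa using (hw_top i ▸ hwK i (l - 1) (by omega))
    | succ j ih =>
      rw [Function.iterate_succ_apply']
      exact hclosed _ ih
  refine ⟨l * l, η, ?_, ?_⟩
  · refine le_antisymm le_top ?_
    rw [← hgen]
    refine (IntermediateField.adjoin_le_iff).mpr ?_
    rintro e ⟨i, j, rfl⟩
    exact hiter i j
  · intro p
    set i0 : Fin l := ⟨p.val % l, Nat.mod_lt _ hl0⟩ with hi0
    set k : ℕ := p.val / l with hk
    have hkl : k < l := Nat.div_lt_of_lt_mul p.isLt
    have hηp : η p = w i0 k := rfl
    rw [hηp]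
    rcases Nat.eq_zero_or_pos k with h0 | h1
    · rw [h0, hw0 i0]; exact zero_mem _
    · rw [hDw i0 k hkl h1]
      refine mul_mem ?_ (inv_mem (IntermediateField.algebraMap_mem _ _))
      apply IntermediateField.subset_adjoin
      refine ⟨⟨l * (k - 1) + i0.val, hidx i0 (k - 1) (by omega)⟩,
        ?_, hηw i0 (k - 1) (by omega)⟩
      show (⟨l * (k - 1) + i0.val, _⟩ : Fin (l * l)) < p
      rw [Fin.lt_def]
      show l * (k - 1) + p.val % l < p.val
      have e1 : l * (p.val / l) + p.val % l = p.val := Nat.div_add_mod p.val l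
      rw [← hk] at e1
      have e2 : p.val % l < l := Nat.mod_lt _ hl0
      obtain ⟨k', hkk⟩ : ∃ k', k = k' + 1 := ⟨k - 1, (Nat.succ_pred_eq_of_pos h1).symm⟩
      have e3 : l * (k - 1) = l * k' := by rw [hkk]; rfl
      have e4 : l * k = l * k' + l := by rw [hkk]; ring
      omega
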